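/- arXiv:2111.04600 — 2 statements merged into one kernel-verified Lean document; each statement's English description precedes it below -/
import Mathlib

section
/- Let α ∈ ℝ[t] be a nonzero real polynomial, let A ∈ ℍ[t] be a nonzero quaternion polynomial, and let B ∈ ℍ[t] be arbitrary. Set P = αA and D = BA. Then the dual quaternion polynomial C = P + εD satisfies the Study condition P·D̄ + D·P̄ = 0 if and only if B is vectorial, i.e. B + B̄ = 0. -/
open Polynomial

noncomputable section

/-- The quaternion unit `i`. -/
def qi : Quaternion ℝ := ⟨0, 1, 0, 0⟩

/-- Embedding of real polynomials into quaternion polynomials (scalar coefficients). -/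
def toQ : Polynomial ℝ →+* Polynomial (Quaternion ℝ) :=
  mapRingHom (algebraMap ℝ (Quaternion ℝ))

/-- Coefficientwise quaternion conjugation of a quaternion polynomial. -/
def pconj (p : Polynomial (Quaternion ℝ)) : Polynomial (Quaternion ℝ) :=
  p.sum fun n a => monomial n (star a)

lemma pconj_coeff (p : Polynomial (Quaternion ℝ)) (n : ℕ) :
    (pconj p).coeff n = star (p.coeff n) := by
  unfold pconj
  rw [Polynomial.sum_def, finset_sum_coeff]
  simp only [coeff_monomial]
  by_cases h : n ∈ p.support
  · rw [Finset.sum_eq_single n (fun b _ hb => if_neg hb) (fun hn => absurd h hn)]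
    simp
  · have : ∀ b ∈ p.support, (if b = n then star (p.coeff b) else 0) = 0 := by
      intro b hb
      rw [if_neg]
      intro he
      exact h (he ▸ hb)
    rw [Finset.sum_eq_zero this, Polynomial.notMem_support_iff.mp h, star_zero]

lemma pconj_mul (p q : Polynomial (Quaternion ℝ)) :
    pconj (p * q) = pconj q * pconj p := by
  refine Polynomial.ext fun n => ?_
  rw [pconj_coeff, coeff_mul, coeff_mul, star_sum]
  rw [← Finset.sum_nbij' (fun x => (x.2, x.1)) (fun x => (x.2, x.1))]
  · intro x hx
    simp only [Finset.HasAntidiagonal.mem_antidiagonal] at hx ⊢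
    omega
  · intro x hx
    simp only [Finset.HasAntidiagonal.mem_antidiagonal] at hx ⊢
    omega
  · intros; rfl
  · intros; rfl
  · intro x _
    rw [pconj_coeff, pconj_coeff, star_mul]

lemma pconj_add (p q : Polynomial (Quaternion ℝ)) :
    pconj (p + q) = pconj p + pconj q := by
  refine Polynomial.ext fun n => ?_; simp [pconj_coeff]

lemma pconj_toQ (α : Polynomial ℝ) : pconj (toQ α) = toQ α := by
  refine Polynomial.ext fun n => ?_
  rw [pconj_coeff]
  simp [toQ, Quaternion.star_coe]

lemma toQ_comm (α : Polynomial ℝ) (p : Polynomial (Quaternion ℝ)) :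
    toQ α * p = p * toQ α := by
  refine Polynomial.ext fun n => ?_
  rw [coeff_mul, coeff_mul]
  rw [← Finset.sum_nbij' (fun x => (x.2, x.1)) (fun x => (x.2, x.1))]
  · intro x hx
    simp only [Finset.HasAntidiagonal.mem_antidiagonal] at hx ⊢
    omega
  · intro x hx
    simp only [Finset.HasAntidiagonal.mem_antidiagonal] at hx ⊢
    omega
  · intros; rfl
  · intros; rfl
  · intro x _
    simp only [toQ, coe_mapRingHom, coeff_map]
    exact (Algebra.commutes (α.coeff x.2) _).symm

/-- The coefficients of `A * pconj A` are real (star-fixed). -/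
lemma norm_real (A : Polynomial (Quaternion ℝ)) :
    pconj (A * pconj A) = A * pconj A := by
  rw [pconj_mul]
  congr 1
  refine Polynomial.ext fun n => ?_
  rw [pconj_coeff, pconj_coeff, star_star]

lemma norm_comm (A p : Polynomial (Quaternion ℝ)) :
    (A * pconj A) * p = p * (A * pconj A) := by
  have hreal : ∀ n, ∃ r : ℝ, (A * pconj A).coeff n = (r : Quaternion ℝ) := by
    intro n
    have h : star ((A * pconj A).coeff n) = (A * pconj A).coeff n := by
      conv_lhs => rw [← pconj_coeff, norm_real]
    exact ⟨((A * pconj A).coeff n).re, Quaternion.star_eq_self.mp h⟩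
  refine Polynomial.ext fun n => ?_
  rw [coeff_mul, coeff_mul]
  rw [← Finset.sum_nbij' (fun x => (x.2, x.1)) (fun x => (x.2, x.1))]
  · intro x hx
    simp only [Finset.HasAntidiagonal.mem_antidiagonal] at hx ⊢
    omega
  · intro x hx
    simp only [Finset.HasAntidiagonal.mem_antidiagonal] at hx ⊢
    omega
  · intros; rfl
  · intros; rfl
  · intro x _
    obtain ⟨r, hr⟩ := hreal x.2
    rw [hr, Quaternion.coe_mul_eq_smul, Quaternion.mul_coe_eq_smul]

lemma pconj_ne_zero {A : Polynomial (Quaternion ℝ)} (hA : A ≠ 0) : pconj A ≠ 0 := by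
  intro h
  apply hA
  refine Polynomial.ext fun n => ?_
  have := congrArg (fun p => Polynomial.coeff p n) h
  simp only [pconj_coeff, coeff_zero] at this
  simpa using congrArg star this

/-- For nonzero `α ∈ ℝ[t]`, nonzero `A ∈ ℍ[t]` and arbitrary `B ∈ ℍ[t]`,
setting `P = αA` and `D = BA`, the dual quaternion polynomial `C = P + εD` satisfies the
Study condition `P·D̄ + D·P̄ = 0` if and only if `B` is vectorial, i.e. `B + B̄ = 0`. -/
theorem study_condition_iff_vectorial (α : Polynomial ℝ) (hα : α ≠ 0)
    (A : Polynomial (Quaternion ℝ)) (hA : A ≠ 0) (B : Polynomial (Quaternion ℝ)) :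
    (toQ α * A) * pconj (B * A) + (B * A) * pconj (toQ α * A) = 0 ↔ B + pconj B = 0 := by
  have key : (toQ α * A) * pconj (B * A) + (B * A) * pconj (toQ α * A)
      = (toQ α * (A * pconj A)) * (pconj B + B) := by
    rw [pconj_mul, pconj_mul, pconj_toQ]
    have h1 : toQ α * A * (pconj A * pconj B) = toQ α * (A * pconj A) * pconj B := by
      simp only [mul_assoc]
    have h2 : B * A * (pconj A * toQ α) = toQ α * (A * pconj A) * B := by
      rw [show B * A * (pconj A * toQ α) = B * (A * pconj A) * toQ α by
        simp only [mul_assoc], ← norm_comm, ← toQ_comm]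
      simp only [mul_assoc]
    rw [h1, h2, mul_add]
  rw [key]
  have hN : toQ α * (A * pconj A) ≠ 0 := by
    apply mul_ne_zero
    · intro h
      apply hα
      have : Function.Injective (toQ : Polynomial ℝ → Polynomial (Quaternion ℝ)) := by
        apply Polynomial.map_injective
        exact fun a b hab => by
          simpa using congrArg QuaternionAlgebra.re hab
      exact this (by simpa using h)
    · exact mul_ne_zero hA (pconj_ne_zero hA)
  constructor
  · intro h
    have := (mul_eq_zero.mp h).resolve_left hN
    rwa [add_comm] at this
  · intro h
    rw [add_comm] at h
    rw [h, mul_zero]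
end
end

section
/- Let α ∈ ℝ[t] be nonzero, let A ∈ ℍ[t] be nonzero and reduced with respect to i, and write A i Ā = F₁·i + F₂·j + F₃·k with F₁, F₂, F₃ ∈ ℝ[t]. Let z ∈ ℂ be a root of α (viewed in ℂ[t]) of multiplicity n ≥ 3. Then there always exist μ ∈ ℂ[t] and b₁, b₂, b₃ ∈ ℂ[t], not all divisible by (X − z)ⁿ, such that α·b_m′ − α′·b_m = μ·F_m for m = 1, 2, 3 (all polynomials viewed in ℂ[t]). -/
open Polynomial

noncomputable section

/-- The quaternion unit `j`. -/
def qj : Quaternion ℝ := ⟨0, 0, 1, 0⟩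
/-- The quaternion unit `k`. -/
def qk : Quaternion ℝ := ⟨0, 0, 0, 1⟩

/-- Embedding of real polynomials into complex polynomials. -/
def toC : Polynomial ℝ →+* Polynomial ℂ :=
  mapRingHom (algebraMap ℝ ℂ)

/-- `A ∈ ℍ[t]` is *reduced with respect to `i`* if it has no real polynomial factor of
positive degree and no right factor of positive degree all of whose coefficients lie in the
subalgebra of `ℍ` generated by `1` and `i`. -/
def ReducedWrtI (A : Polynomial (Quaternion ℝ)) : Prop :=
  (∀ ψ : Polynomial ℝ, ∀ A' : Polynomial (Quaternion ℝ), A = toQ ψ * A' → ψ.natDegree = 0) ∧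
  (∀ A' R : Polynomial (Quaternion ℝ), A = A' * R →
    (∀ n, (R.coeff n).imJ = 0 ∧ (R.coeff n).imK = 0) → R.natDegree = 0)

namespace RmfAux


local notation "Hq" => Quaternion ℝ

/-! ### Quaternion facts -/

lemma qi_mul_qi : qi * qi = -1 := by ext <;> simp [Quaternion.re_one, Quaternion.imI_one, Quaternion.imJ_one, Quaternion.imK_one] <;> simp [qi]

lemma star_qi : star qi = -qi := by ext <;> simp <;> simp [qi]

lemma qi_ne_zero : qi ≠ 0 := by
  intro h
  have := congrArg QuaternionAlgebra.imI h
  simp [qi, Quaternion.imI_zero] at this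

lemma commute_qi_imJ_imK {a : Hq} (h : a * qi = qi * a) : a.imJ = 0 ∧ a.imK = 0 := by
  have h1 := congrArg QuaternionAlgebra.imJ h
  have h2 := congrArg QuaternionAlgebra.imK h
  simp [Quaternion.imJ_mul, Quaternion.imK_mul] at h1 h2
  simp [qi] at h1 h2
  constructor <;> linarith

lemma sq_pure {u : Hq} (h : u.re = 0) (hn : Quaternion.normSq u = 1) : u * u = -1 := by
  have := Quaternion.sq_eq_neg_normSq (a := u)
  rw [sq] at this
  rw [this.mpr h, hn]
  norm_num

lemma exists_conjugator {u : Hq} (hre : u.re = 0) (hn : Quaternion.normSq u = 1) :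
    ∃ w : Hq, w ≠ 0 ∧ w * qi = u * w := by
  by_cases h : u = -qi
  · refine ⟨qj, ?_, ?_⟩
    · intro hw; have := congrArg QuaternionAlgebra.imJ hw; simp [qj, Quaternion.imJ_zero] at this
    · subst h; ext <;> simp <;> simp [qi, qj] <;> norm_num
  · refine ⟨qi + u, ?_, ?_⟩
    · intro hw
      apply h
      have : u = -qi + (qi + u) := by abel
      rw [hw] at this; simpa using this
    · have h2 : u * u = -1 := sq_pure hre hn
      have h3 : qi * qi = -1 := qi_mul_qi
      calc (qi + u) * qi = qi * qi + u * qi := by noncomm_ring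
        _ = u * u + u * qi := by rw [h2, h3]
        _ = u * (qi + u) := by noncomm_ring

lemma quat_real_of_star_eq {a : Hq} (h : star a = a) : a = ((a.re : ℝ) : Hq) := by
  have h1 := congrArg QuaternionAlgebra.imI h
  have h2 := congrArg QuaternionAlgebra.imJ h
  have h3 := congrArg QuaternionAlgebra.imK h
  simp only [Quaternion.imI_star, Quaternion.imJ_star, Quaternion.imK_star] at h1 h2 h3
  ext <;> simp <;> linarith

/-! ### pconj and toQ -/

lemma coeff_pconj (p : Polynomial Hq) (k : ℕ) : (pconj p).coeff k = star (p.coeff k) := by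
  unfold pconj
  rw [Polynomial.sum_def, finset_sum_coeff]
  simp only [coeff_monomial]
  rw [Finset.sum_ite_eq' p.support k (fun n => star (p.coeff n))]
  by_cases h : k ∈ p.support
  · simp [h]
  · simp [h, Polynomial.notMem_support_iff.mp h]

lemma pconj_add (p q : Polynomial Hq) : pconj (p + q) = pconj p + pconj q := by
  refine Polynomial.ext fun k => ?_
  simp [coeff_pconj]

lemma pconj_mul (p q : Polynomial Hq) : pconj (p * q) = pconj q * pconj p := by
  refine Polynomial.ext fun k => ?_
  rw [coeff_pconj, coeff_mul, coeff_mul, star_sum,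
    ← Finset.Nat.sum_antidiagonal_swap
      (f := fun a => (pconj q).coeff a.1 * (pconj p).coeff a.2)]
  refine Finset.sum_congr rfl fun a _ => ?_
  simp [coeff_pconj, star_mul]

lemma pconj_C (a : Hq) : pconj (Polynomial.C a) = Polynomial.C (star a) := by
  refine Polynomial.ext fun k => ?_
  simp [coeff_pconj, coeff_C, apply_ite (star : Hq → Hq)]

lemma pconj_pconj (p : Polynomial Hq) : pconj (pconj p) = p := by
  refine Polynomial.ext fun k => ?_
  rw [coeff_pconj, coeff_pconj, star_star]

lemma coeff_toQ (ψ : Polynomial ℝ) (k : ℕ) :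
    (toQ ψ).coeff k = algebraMap ℝ Hq (ψ.coeff k) := by
  simp [toQ, coeff_map]

lemma pconj_toQ (ψ : Polynomial ℝ) : pconj (toQ ψ) = toQ ψ := by
  refine Polynomial.ext fun k => ?_
  rw [coeff_pconj]
  have : (algebraMap ℝ Hq) (ψ.coeff k) = ((ψ.coeff k : ℝ) : Hq) := rfl
  rw [coeff_toQ, this, Quaternion.star_coe]

lemma pconj_eq_zero {P : Polynomial Hq} : pconj P = 0 ↔ P = 0 := by
  constructor <;> intro h
  · refine Polynomial.ext fun k => ?_
    have := congrArg (fun q => Polynomial.coeff q k) h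
    simp only [coeff_pconj, coeff_zero] at this ⊢
    simpa using congrArg star this
  · subst h
    refine Polynomial.ext fun k => ?_
    simp [coeff_pconj]

lemma support_pconj (P : Polynomial Hq) : (pconj P).support = P.support := by
  ext k
  simp [Polynomial.mem_support_iff, coeff_pconj, star_eq_zero]

lemma natDegree_pconj (P : Polynomial Hq) : (pconj P).natDegree = P.natDegree := by
  unfold Polynomial.natDegree Polynomial.degree
  rw [support_pconj]

lemma toQ_comm (ψ : Polynomial ℝ) (P : Polynomial Hq) : toQ ψ * P = P * toQ ψ := by
  refine Polynomial.ext fun k => ?_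
  rw [coeff_mul, coeff_mul,
    ← Finset.Nat.sum_antidiagonal_swap
      (f := fun a => P.coeff a.1 * (toQ ψ).coeff a.2)]
  refine Finset.sum_congr rfl fun a _ => ?_
  show (toQ ψ).coeff a.1 * P.coeff a.2 = P.coeff a.2 * (toQ ψ).coeff a.1
  rw [coeff_toQ]
  exact Algebra.commutes _ _

lemma toQ_injective : Function.Injective toQ :=
  Polynomial.map_injective _ (algebraMap ℝ Hq).injective

lemma toQ_ne_zero {ψ : Polynomial ℝ} (h : ψ ≠ 0) : toQ ψ ≠ 0 := by
  intro h0
  exact h (toQ_injective (by simpa using h0))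

lemma support_toQ (ψ : Polynomial ℝ) : (toQ ψ).support = ψ.support := by
  ext k
  simp only [Polynomial.mem_support_iff, coeff_toQ]
  constructor
  · intro h hc; exact h (by rw [hc, map_zero])
  · intro h hc; exact h ((algebraMap ℝ Hq).injective (by simpa using hc))

lemma natDegree_toQ (ψ : Polynomial ℝ) : (toQ ψ).natDegree = ψ.natDegree := by
  unfold Polynomial.natDegree Polynomial.degree
  rw [support_toQ]

def rePoly (P : Polynomial Hq) : Polynomial ℝ := P.sum fun n a => monomial n a.re

lemma coeff_rePoly (P : Polynomial Hq) (k : ℕ) : (rePoly P).coeff k = (P.coeff k).re := by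
  unfold rePoly
  rw [Polynomial.sum_def, finset_sum_coeff]
  simp only [coeff_monomial]
  rw [Finset.sum_ite_eq' P.support k (fun n => (P.coeff n).re)]
  by_cases h : k ∈ P.support
  · simp [h]
  · simp [h, Polynomial.notMem_support_iff.mp h, Quaternion.re_zero]

lemma toQ_rePoly {P : Polynomial Hq} (h : pconj P = P) : toQ (rePoly P) = P := by
  refine Polynomial.ext fun k => ?_
  have hs : star (P.coeff k) = P.coeff k := by
    conv_rhs => rw [← h, coeff_pconj]
  rw [coeff_toQ, coeff_rePoly]
  exact (quat_real_of_star_eq hs).symm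

lemma coe_C_mul_eq_smul (r : ℝ) (P : Polynomial Hq) :
    Polynomial.C ((r : Hq)) * P = r • P := by
  refine Polynomial.ext fun k => ?_
  rw [coeff_C_mul, Polynomial.coeff_smul, Quaternion.coe_mul_eq_smul]

/-! ### Sandwich lemmas -/

lemma pconj_sandwich (P B : Polynomial Hq) (hB : pconj B = -B) :
    pconj (P * B * pconj P) = -(P * B * pconj P) := by
  rw [pconj_mul, pconj_mul, pconj_pconj, hB]
  noncomm_ring

lemma sandwich_dvd (q : ℝ[X]) (A S R B : Polynomial Hq) (hAeq : A = toQ q * S + R)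
    (hdvd : toQ q ∣ A * B * pconj A) : toQ q ∣ R * B * pconj R := by
  have hpA : pconj A = toQ q * pconj S + pconj R := by
    rw [hAeq, pconj_add, pconj_mul, pconj_toQ, toQ_comm]
  have hid : R * B * pconj R
      = A * B * pconj A - toQ q * (S * (B * pconj A)) - (R * B) * (toQ q * pconj S) := by
    rw [hpA, hAeq]
    noncomm_ring
  rw [hid]
  refine dvd_sub (dvd_sub hdvd ⟨_, rfl⟩) ⟨R * B * pconj S, ?_⟩
  rw [← mul_assoc, ← toQ_comm, mul_assoc, mul_assoc]




set_option maxHeartbeats 2000000 in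
theorem no_common_root (A : Polynomial Hq) (hA : A ≠ 0) (hred : ReducedWrtI A)
    (F₁ F₂ F₃ : Polynomial ℝ)
    (hF : A * Polynomial.C qi * pconj A
      = toQ F₁ * Polynomial.C qi + toQ F₂ * Polynomial.C qj + toQ F₃ * Polynomial.C qk)
    (z : ℂ) (h1 : (toC F₁).eval z = 0) (h2 : (toC F₂).eval z = 0)
    (h3 : (toC F₃).eval z = 0) : False := by
  classical
  -- A common divisor machine
  have hdvdV : ∀ q : ℝ[X], q ∣ F₁ → q ∣ F₂ → q ∣ F₃ →
      toQ q ∣ A * Polynomial.C qi * pconj A := by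
    rintro q ⟨G₁, hG₁⟩ ⟨G₂, hG₂⟩ ⟨G₃, hG₃⟩
    rw [hF, hG₁, hG₂, hG₃, map_mul, map_mul, map_mul]
    refine dvd_add (dvd_add ⟨toQ G₁ * Polynomial.C qi, by rw [mul_assoc]⟩
      ⟨toQ G₂ * Polynomial.C qj, by rw [mul_assoc]⟩) ⟨toQ G₃ * Polynomial.C qk, by rw [mul_assoc]⟩
  by_cases him : z.im = 0
  · -- z is real; q = X - z.re
    set r0 : ℝ := z.re with hr0
    have hzr : ((r0 : ℝ) : ℂ) = z := by
      apply Complex.ext <;> simp [him, hr0]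
    have hroot : ∀ F : ℝ[X], (toC F).eval z = 0 → (X - Polynomial.C r0) ∣ F := by
      intro F hF0
      rw [dvd_iff_isRoot]
      have heq : (toC F).eval z = algebraMap ℝ ℂ (F.eval r0) := by
        rw [← hzr]
        show (F.map (algebraMap ℝ ℂ)).eval ((algebraMap ℝ ℂ) r0) = _
        rw [eval_map, eval₂_at_apply]
      exact (map_eq_zero_iff _ (algebraMap ℝ ℂ).injective).mp (by rw [← heq]; exact hF0)
    set q : ℝ[X] := X - Polynomial.C r0 with hq
    have hqmon : q.Monic := monic_X_sub_C r0
    have hqQmon : (toQ q).Monic := by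
      have : toQ q = q.map (algebraMap ℝ Hq) := by simp [toQ, coe_mapRingHom]
      rw [this]; exact hqmon.map _
    set S : Polynomial Hq := A /ₘ toQ q with hS
    set R : Polynomial Hq := A %ₘ toQ q with hR
    have hAeq : A = toQ q * S + R := by
      rw [add_comm]; exact (modByMonic_add_div A (toQ q)).symm
    have hqRR : toQ q ∣ R * Polynomial.C qi * pconj R :=
      sandwich_dvd q A S R _ hAeq (hdvdV q (hroot _ h1) (hroot _ h2) (hroot _ h3))
    by_cases hR0 : R = 0
    · rw [hR0, add_zero] at hAeq
      have := hred.1 q S hAeq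
      rw [hq, natDegree_X_sub_C] at this
      exact one_ne_zero this
    · have hndR : R.natDegree = 0 := by
        have h' := natDegree_lt_natDegree hR0 (degree_modByMonic_lt A hqQmon)
        rw [natDegree_toQ, hq, natDegree_X_sub_C] at h'
        omega
      have hRC : R = Polynomial.C (R.coeff 0) := eq_C_of_natDegree_eq_zero hndR
      obtain ⟨W₂, hW₂⟩ := hqRR
      by_cases hW0 : W₂ = 0
      · rw [hW0, mul_zero] at hW₂
        rcases mul_eq_zero.mp hW₂ with h' | h'
        · rcases mul_eq_zero.mp h' with h'' | h''
          · exact hR0 h''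
          · exact (Polynomial.C_ne_zero.mpr qi_ne_zero) h''
        · exact hR0 (pconj_eq_zero.mp h')
      · have hL : (R * Polynomial.C qi * pconj R).natDegree = 0 := by
          rw [hRC, pconj_C, ← map_mul, ← map_mul]
          exact natDegree_C _
        have hq1 : (toQ q).natDegree = 1 := by rw [natDegree_toQ, hq, natDegree_X_sub_C]
        rw [hW₂, natDegree_mul (toQ_ne_zero hqmon.ne_zero) hW0, hq1] at hL
        omega
  ·
    -- z is not real; use the quadratic real factor
    set q : ℝ[X] := X ^ 2 - Polynomial.C (2 * z.re) * X + Polynomial.C (‖z‖ ^ 2) with hq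
    have hqd : ∀ F : ℝ[X], (toC F).eval z = 0 → q ∣ F := by
      intro F hF0
      refine Polynomial.quadratic_dvd_of_aeval_eq_zero_im_ne_zero F ?_ him
      rw [aeval_def, ← eval_map]
      exact hF0
    have hqmon : q.Monic := by
      have e : q = X ^ 2 + (Polynomial.C (‖z‖ ^ 2) - Polynomial.C (2 * z.re) * X) := by
        rw [hq]; ring
      rw [e]
      apply monic_X_pow_add
      refine lt_of_le_of_lt (degree_sub_le _ _) (max_lt ?_ ?_)
      · exact lt_of_le_of_lt degree_C_le (by decide)
      · refine lt_of_le_of_lt (degree_mul_le _ _) ?_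
        refine lt_of_le_of_lt (add_le_add degree_C_le (le_of_eq degree_X)) (by decide)
    have hqdeg : q.natDegree = 2 := by
      have e : q = Polynomial.C 1 * X ^ 2 + Polynomial.C (-(2 * z.re)) * X
          + Polynomial.C (‖z‖ ^ 2) := by
        rw [hq, map_neg, map_one]; ring
      rw [e, natDegree_quadratic one_ne_zero]
    have hq0 : q ≠ 0 := hqmon.ne_zero
    have hqQmon : (toQ q).Monic := by
      have e : toQ q = q.map (algebraMap ℝ Hq) := by simp [toQ, coe_mapRingHom]
      rw [e]; exact hqmon.map _
    have hqQ0 : toQ q ≠ 0 := toQ_ne_zero hq0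
    set S : Polynomial Hq := A /ₘ toQ q with hS
    set R : Polynomial Hq := A %ₘ toQ q with hRdef
    have hAeq : A = toQ q * S + R := by
      rw [add_comm]; exact (modByMonic_add_div A (toQ q)).symm
    by_cases hR0 : R = 0
    · rw [hR0, add_zero] at hAeq
      have h0 := hred.1 q S hAeq
      omega
    have hpR0 : pconj R ≠ 0 := fun h => hR0 (pconj_eq_zero.mp h)
    have hndR : R.natDegree ≤ 1 := by
      have h' := natDegree_lt_natDegree hR0 (degree_modByMonic_lt A hqQmon)
      rw [natDegree_toQ, hqdeg] at h'
      omega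
    -- the norm polynomial ρ
    have hsaA : pconj (A * pconj A) = A * pconj A := by rw [pconj_mul, pconj_pconj]
    set ρ : ℝ[X] := rePoly (A * pconj A) with hρdef
    have hρ : toQ ρ = A * pconj A := toQ_rePoly hsaA
    have hpAA : pconj A * A = toQ ρ := by
      apply mul_left_cancel₀ hA
      calc A * (pconj A * A) = (A * pconj A) * A := by rw [mul_assoc]
        _ = toQ ρ * A := by rw [hρ]
        _ = A * toQ ρ := toQ_comm _ _
    have haux : ∀ (F G : ℝ[X]) (x y : Hq),
        (toQ F * Polynomial.C x) * (toQ G * Polynomial.C y)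
          = toQ (F * G) * Polynomial.C (x * y) := by
      intro F G x y
      calc (toQ F * Polynomial.C x) * (toQ G * Polynomial.C y)
          = toQ F * (Polynomial.C x * toQ G) * Polynomial.C y := by noncomm_ring
        _ = toQ F * (toQ G * Polynomial.C x) * Polynomial.C y := by
            rw [toQ_comm G (Polynomial.C x)]
        _ = (toQ F * toQ G) * (Polynomial.C x * Polynomial.C y) := by noncomm_ring
        _ = toQ (F * G) * Polynomial.C (x * y) := by rw [map_mul, map_mul]
    have hij : qi * qj = qk := by ext <;> simp <;> simp [qi, qj, qk]
    have hji : qj * qi = -qk := by ext <;> simp <;> simp [qi, qj, qk]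
    have hik : qi * qk = -qj := by ext <;> simp <;> simp [qi, qj, qk]
    have hki : qk * qi = qj := by ext <;> simp <;> simp [qi, qj, qk]
    have hjk : qj * qk = qi := by ext <;> simp <;> simp [qi, qj, qk]
    have hkj : qk * qj = -qi := by ext <;> simp <;> simp [qi, qj, qk]
    have hjj : qj * qj = -1 := by ext <;> simp [Quaternion.re_one, Quaternion.imI_one, Quaternion.imJ_one, Quaternion.imK_one] <;> simp [qj]
    have hkk : qk * qk = -1 := by ext <;> simp [Quaternion.re_one, Quaternion.imI_one, Quaternion.imJ_one, Quaternion.imK_one] <;> simp [qk]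
    have hVV : (A * Polynomial.C qi * pconj A) * (A * Polynomial.C qi * pconj A)
        = - toQ (F₁ * F₁ + F₂ * F₂ + F₃ * F₃) := by
      rw [hF]
      simp only [add_mul, mul_add]
      rw [haux, haux, haux, haux, haux, haux, haux, haux, haux]
      rw [qi_mul_qi, hjj, hkk, hij, hji, hik, hki, hjk, hkj]
      rw [mul_comm F₂ F₁, mul_comm F₃ F₁, mul_comm F₃ F₂]
      simp only [map_neg, mul_neg, map_add, map_one, mul_one]
      abel
    have hVsq : (A * Polynomial.C qi * pconj A) * (A * Polynomial.C qi * pconj A)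
        = - (toQ ρ * toQ ρ) := by
      calc (A * Polynomial.C qi * pconj A) * (A * Polynomial.C qi * pconj A)
            = (A * Polynomial.C qi) * (pconj A * A) * (Polynomial.C qi * pconj A) := by
            noncomm_ring
        _ = (A * Polynomial.C qi) * toQ ρ * (Polynomial.C qi * pconj A) := by rw [hpAA]
        _ = toQ ρ * (A * Polynomial.C qi) * (Polynomial.C qi * pconj A) := by
            rw [← toQ_comm ρ (A * Polynomial.C qi)]
        _ = toQ ρ * (A * (Polynomial.C qi * Polynomial.C qi) * pconj A) := by noncomm_ring
        _ = toQ ρ * (A * Polynomial.C (qi * qi) * pconj A) := by rw [← map_mul]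
        _ = toQ ρ * (A * Polynomial.C (-1 : Hq) * pconj A) := by rw [qi_mul_qi]
        _ = - (toQ ρ * (A * pconj A)) := by simp [map_neg, mul_neg, neg_mul]
        _ = - (toQ ρ * toQ ρ) := by rw [hρ]
    have hρρ : ρ * ρ = F₁ * F₁ + F₂ * F₂ + F₃ * F₃ := by
      apply toQ_injective
      have e := hVsq.symm.trans hVV
      have e2 := congrArg Neg.neg e
      rw [neg_neg, neg_neg] at e2
      rw [map_mul]
      rw [e2]
    have hρroot : (toC ρ).eval z = 0 := by
      have e : ((toC ρ).eval z) * ((toC ρ).eval z) = 0 := by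
        have l := congrArg (fun ψ => (toC ψ).eval z) hρρ
        simp only [map_mul, map_add, eval_mul, eval_add] at l
        rw [l, h1, h2, h3]; ring
      exact mul_self_eq_zero.mp e
    have hqρ : q ∣ ρ := hqd ρ hρroot
    -- R * pconj R
    have hqRpR : toQ q ∣ R * pconj R := by
      have h' := sandwich_dvd q A S R 1 hAeq (by
        rw [mul_one, ← hρ]
        exact map_dvd toQ hqρ)
      simpa using h'
    obtain ⟨Wr, hWr⟩ := hqRpR
    have hWrsa : pconj Wr = Wr := by
      have hsa : pconj (R * pconj R) = R * pconj R := by rw [pconj_mul, pconj_pconj]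
      rw [hWr, pconj_mul, pconj_toQ, ← toQ_comm] at hsa
      exact mul_left_cancel₀ hqQ0 hsa
    set ρR : ℝ[X] := rePoly Wr with hρRdef
    have hWrT : toQ ρR = Wr := toQ_rePoly hWrsa
    have hRpR : R * pconj R = toQ (q * ρR) := by rw [map_mul, hWrT, hWr]
    have hRpR0 : R * pconj R ≠ 0 := mul_ne_zero hR0 hpR0
    have hρR0 : ρR ≠ 0 := by
      have e : q * ρR ≠ 0 := fun h0 => hRpR0 (by rw [hRpR, h0, map_zero])
      exact right_ne_zero_of_mul e
    have hdeg2 : 2 * R.natDegree = 2 + ρR.natDegree := by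
      have l := congrArg Polynomial.natDegree hRpR
      rw [natDegree_mul hR0 hpR0, natDegree_pconj, natDegree_toQ,
        natDegree_mul hq0 hρR0, hqdeg] at l
      omega
    have hndR1 : R.natDegree = 1 := by omega
    have hndρR : ρR.natDegree = 0 := by omega
    set c : ℝ := ρR.coeff 0 with hcdef
    have hρRC : ρR = Polynomial.C c := eq_C_of_natDegree_eq_zero hndρR
    have hc0 : c ≠ 0 := fun h => hρR0 (by rw [hρRC, h, map_zero])
    have hRpRc : R * pconj R = toQ (q * Polynomial.C c) := by rw [hRpR, hρRC]
    have hpRR : pconj R * R = toQ (q * Polynomial.C c) := by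
      apply mul_left_cancel₀ hR0
      calc R * (pconj R * R) = (R * pconj R) * R := by rw [mul_assoc]
        _ = toQ (q * Polynomial.C c) * R := by rw [hRpRc]
        _ = R * toQ (q * Polynomial.C c) := toQ_comm _ _
    -- the vector part of R i R̄
    obtain ⟨W₂, hW₂⟩ := sandwich_dvd q A S R (Polynomial.C qi) hAeq
      (hdvdV q (hqd _ h1) (hqd _ h2) (hqd _ h3))
    have hCqi0 : (Polynomial.C qi : Polynomial Hq) ≠ 0 := Polynomial.C_ne_zero.mpr qi_ne_zero
    have hRCpR0 : R * Polynomial.C qi * pconj R ≠ 0 :=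
      mul_ne_zero (mul_ne_zero hR0 hCqi0) hpR0
    have hW₂0 : W₂ ≠ 0 := by rintro rfl; rw [mul_zero] at hW₂; exact hRCpR0 hW₂
    have hndW₂ : W₂.natDegree = 0 := by
      have l := congrArg Polynomial.natDegree hW₂
      rw [natDegree_mul (mul_ne_zero hR0 hCqi0) hpR0, natDegree_mul hR0 hCqi0,
        natDegree_pconj, natDegree_C, natDegree_mul hqQ0 hW₂0, natDegree_toQ, hqdeg,
        hndR1] at l
      omega
    obtain ⟨v, hv⟩ := Polynomial.natDegree_eq_zero.mp hndW₂
    have hv0 : v ≠ 0 := by rintro rfl; rw [map_zero] at hv; exact hW₂0 hv.symm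
    have hW₂' : R * Polynomial.C qi * pconj R = toQ q * Polynomial.C v := by rw [hW₂, ← hv]
    have hCqi_neg : pconj (Polynomial.C qi) = -(Polynomial.C qi) := by
      rw [pconj_C, star_qi, map_neg]
    have hpur := pconj_sandwich R (Polynomial.C qi) hCqi_neg
    rw [hW₂'] at hpur
    have hstarv : star v = -v := by
      rw [pconj_mul, pconj_toQ, pconj_C, ← toQ_comm] at hpur
      have e : toQ q * Polynomial.C (star v) = toQ q * Polynomial.C (-v) := by
        rw [hpur, map_neg, mul_neg]
      have := mul_left_cancel₀ hqQ0 e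
      exact Polynomial.C_injective this
    have hvre : v.re = 0 := Quaternion.star_eq_neg.mp hstarv
    -- norm of v
    have hnormv : Quaternion.normSq v = c * c := by
      have lhs : (R * Polynomial.C qi * pconj R) * pconj (R * Polynomial.C qi * pconj R)
          = toQ ((q * q) * Polynomial.C (c * c)) := by
        rw [pconj_sandwich R (Polynomial.C qi) hCqi_neg]
        calc (R * Polynomial.C qi * pconj R) * -(R * Polynomial.C qi * pconj R)
            = -((R * Polynomial.C qi) * (pconj R * R) * (Polynomial.C qi * pconj R)) := by
              noncomm_ring
          _ = -((R * Polynomial.C qi) * toQ (q * Polynomial.C c)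
                * (Polynomial.C qi * pconj R)) := by rw [hpRR]
          _ = -(toQ (q * Polynomial.C c) * (R * Polynomial.C qi)
                * (Polynomial.C qi * pconj R)) := by
              rw [← toQ_comm (q * Polynomial.C c) (R * Polynomial.C qi)]
          _ = -(toQ (q * Polynomial.C c) * (R * (Polynomial.C qi * Polynomial.C qi)
                * pconj R)) := by noncomm_ring
          _ = -(toQ (q * Polynomial.C c) * (R * Polynomial.C (qi * qi) * pconj R)) := by
              rw [← map_mul]
          _ = -(toQ (q * Polynomial.C c) * (R * Polynomial.C (-1 : Hq) * pconj R)) := by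
              rw [qi_mul_qi]
          _ = toQ (q * Polynomial.C c) * (R * pconj R) := by
              simp [map_neg, mul_neg, neg_mul]
          _ = toQ (q * Polynomial.C c) * toQ (q * Polynomial.C c) := by rw [hRpRc]
          _ = toQ ((q * q) * Polynomial.C (c * c)) := by
              rw [← map_mul]
              congr 1
              rw [map_mul]
              ring
      have rhs : (R * Polynomial.C qi * pconj R) * pconj (R * Polynomial.C qi * pconj R)
          = toQ (q * q) * Polynomial.C (v * star v) := by
        rw [hW₂', pconj_mul, pconj_toQ, pconj_C, ← toQ_comm]
        exact haux q q v (star v)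
      have e : toQ ((q * q) * Polynomial.C (c * c))
          = toQ (q * q) * Polynomial.C (v * star v) := by
        rw [← lhs]; exact rhs
      rw [map_mul] at e
      have hCc2 : toQ (Polynomial.C (c * c)) = Polynomial.C ((algebraMap ℝ Hq) (c * c)) := by
        rw [show toQ (Polynomial.C (c * c)) = (Polynomial.C (c * c)).map (algebraMap ℝ Hq)
          from rfl, Polynomial.map_C]
      rw [hCc2] at e
      have e2 := Polynomial.C_injective (mul_left_cancel₀ (toQ_ne_zero
        (mul_ne_zero hq0 hq0)) e)
      have e3 : v * star v = ((c * c : ℝ) : Hq) := e2.symm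
      rw [Quaternion.self_mul_star] at e3
      exact Quaternion.coe_injective e3
    -- conjugating quaternion
    set u : Hq := c⁻¹ • v with hudef
    have hure : u.re = 0 := by rw [hudef, Quaternion.re_smul, hvre]; simp
    have hun : Quaternion.normSq u = 1 := by
      rw [hudef, Quaternion.normSq_smul, hnormv]
      field_simp
    obtain ⟨w, hw0, hwi⟩ := exists_conjugator hure hun
    -- the coefficient relation
    have hrel : Polynomial.C ((c : Hq)) * (Polynomial.C qi * pconj R)
        = pconj R * Polynomial.C v := by
      apply mul_left_cancel₀ hqQ0
      have e1 : toQ q * (Polynomial.C ((c : Hq)) * (Polynomial.C qi * pconj R))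
          = toQ (q * Polynomial.C c) * (Polynomial.C qi * pconj R) := by
        rw [map_mul]
        have : toQ (Polynomial.C c) = Polynomial.C ((c : Hq)) := by
          rw [show toQ (Polynomial.C c) = (Polynomial.C c).map (algebraMap ℝ Hq) from rfl,
            Polynomial.map_C]
          rfl
        rw [this, mul_assoc]
      have e2 : toQ (q * Polynomial.C c) * (Polynomial.C qi * pconj R)
          = pconj R * (toQ q * Polynomial.C v) := by
        calc toQ (q * Polynomial.C c) * (Polynomial.C qi * pconj R)
            = (pconj R * R) * (Polynomial.C qi * pconj R) := by rw [hpRR]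
          _ = pconj R * (R * Polynomial.C qi * pconj R) := by noncomm_ring
          _ = pconj R * (toQ q * Polynomial.C v) := by rw [hW₂']
      have e3 : pconj R * (toQ q * Polynomial.C v)
          = toQ q * (pconj R * Polynomial.C v) := by
        rw [← mul_assoc, ← toQ_comm, mul_assoc]
      rw [e1, e2, e3]
    have hcoeffrel : ∀ k : ℕ, qi * star (R.coeff k) = star (R.coeff k) * u := by
      intro k
      have l := congrArg (fun p => Polynomial.coeff p k) hrel
      simp only [coeff_C_mul, coeff_mul_C, coeff_pconj] at l
      have l2 : c • (qi * star (R.coeff k)) = star (R.coeff k) * v := by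
        rw [← Quaternion.coe_mul_eq_smul]; exact l
      rw [hudef, mul_smul_comm, ← l2, smul_smul, inv_mul_cancel₀ hc0, one_smul]
    -- the right factor P
    set P : Polynomial Hq := Polynomial.C w⁻¹ * R with hPdef
    have hPco : ∀ k, (P.coeff k) * qi = qi * (P.coeff k) := by
      intro k
      have hx : (star (R.coeff k) * w) * qi = qi * (star (R.coeff k) * w) := by
        calc (star (R.coeff k) * w) * qi = star (R.coeff k) * (w * qi) := by rw [mul_assoc]
          _ = star (R.coeff k) * (u * w) := by rw [hwi]
          _ = (star (R.coeff k) * u) * w := by rw [mul_assoc]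
          _ = (qi * star (R.coeff k)) * w := by rw [← hcoeffrel k]
          _ = qi * (star (R.coeff k) * w) := by rw [mul_assoc]
      have hy : (star w * R.coeff k) * qi = qi * (star w * R.coeff k) := by
        have l := congrArg star hx
        simp only [star_mul, star_star, star_qi] at l
        rw [neg_mul, mul_neg] at l
        exact (neg_inj.mp l).symm
      rw [hPdef, coeff_C_mul, Quaternion.inv_def w, smul_mul_assoc, smul_mul_assoc,
        mul_smul_comm, hy]
    have hPcoeffJK : ∀ k, ((P.coeff k).imJ = 0 ∧ (P.coeff k).imK = 0) :=
      fun k => commute_qi_imJ_imK (hPco k)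
    have hCw0 : (Polynomial.C w⁻¹ : Polynomial Hq) ≠ 0 :=
      Polynomial.C_ne_zero.mpr (inv_ne_zero hw0)
    have hPdeg : P.natDegree = 1 := by
      rw [hPdef, natDegree_mul hCw0 hR0, natDegree_C, hndR1]
    have hnw0 : Quaternion.normSq w ≠ 0 := by rwa [Ne, Quaternion.normSq_eq_zero]
    have hpPP : pconj P * P = (Quaternion.normSq w)⁻¹ • toQ (q * Polynomial.C c) := by
      rw [hPdef, pconj_mul, pconj_C]
      calc pconj R * Polynomial.C (star w⁻¹) * (Polynomial.C w⁻¹ * R)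
          = pconj R * (Polynomial.C (star w⁻¹) * Polynomial.C w⁻¹) * R := by noncomm_ring
        _ = pconj R * Polynomial.C (star w⁻¹ * w⁻¹) * R := by rw [← map_mul]
        _ = pconj R * Polynomial.C ((Quaternion.normSq w⁻¹ : ℝ) : Hq) * R := by
            rw [Quaternion.star_mul_self]
        _ = pconj R * (Polynomial.C ((Quaternion.normSq w⁻¹ : ℝ) : Hq) * R) := by
            rw [mul_assoc]
        _ = pconj R * ((Quaternion.normSq w⁻¹ : ℝ) • R) := by rw [coe_C_mul_eq_smul]
        _ = (Quaternion.normSq w⁻¹ : ℝ) • (pconj R * R) := by rw [mul_smul_comm]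
        _ = (Quaternion.normSq w)⁻¹ • toQ (q * Polynomial.C c) := by
            rw [hpRR, Quaternion.normSq_inv]
    have hqQeq : toQ q = (Quaternion.normSq w * c⁻¹) • (pconj P * P) := by
      rw [hpPP, smul_smul]
      have harith : Quaternion.normSq w * c⁻¹ * (Quaternion.normSq w)⁻¹ = c⁻¹ := by
        field_simp
      rw [harith, ← coe_C_mul_eq_smul]
      have hCc : (Polynomial.C ((c⁻¹ : ℝ) : Hq) : Polynomial Hq)
          = toQ (Polynomial.C c⁻¹) := by
        rw [show toQ (Polynomial.C c⁻¹) = (Polynomial.C c⁻¹).map (algebraMap ℝ Hq) from rfl,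
          Polynomial.map_C]
        rfl
      rw [hCc, ← map_mul]
      congr 1
      have e : Polynomial.C c⁻¹ * (q * Polynomial.C c)
          = q * (Polynomial.C c⁻¹ * Polynomial.C c) := by ring
      rw [e, ← map_mul, inv_mul_cancel₀ hc0, map_one, mul_one]
    have hRP : R = Polynomial.C w * P := by
      rw [hPdef, ← mul_assoc, ← map_mul, mul_inv_cancel₀ hw0, map_one, one_mul]
    have hAfact : A = ((Quaternion.normSq w * c⁻¹) • (S * pconj P) + Polynomial.C w) * P := by
      calc A = toQ q * S + R := hAeq
        _ = S * toQ q + R := by rw [toQ_comm]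
        _ = S * ((Quaternion.normSq w * c⁻¹) • (pconj P * P)) + Polynomial.C w * P := by
            rw [← hqQeq, ← hRP]
        _ = ((Quaternion.normSq w * c⁻¹) • (S * pconj P)) * P + Polynomial.C w * P := by
            rw [mul_smul_comm, smul_mul_assoc, mul_assoc]
        _ = ((Quaternion.normSq w * c⁻¹) • (S * pconj P) + Polynomial.C w) * P := by
            rw [add_mul]
    have hfin := hred.2 _ P hAfact hPcoeffJK
    omega

theorem solveT (z : ℂ) (n : ℕ) (r : Polynomial ℂ)
    (hres : ((taylor z) r).coeff n = 0) :
    ∃ g : Polynomial ℂ,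
      (X - C z) * derivative g - C (n : ℂ) * g = r := by
  set D : Polynomial ℂ := X - C z with hD
  refine ⟨∑ s ∈ Finset.range (r.natDegree + 1),
      C (((taylor z) r).coeff s / ((s : ℂ) - n)) * D ^ s, ?_⟩
  have hterm : ∀ (c : ℂ) (s : ℕ),
      D * derivative (C c * D ^ s) - C (n : ℂ) * (C c * D ^ s)
        = C (c * ((s : ℂ) - n)) * D ^ s := by
    intro c s
    cases s with
    | zero =>
      simp only [pow_zero, mul_one, derivative_C, mul_zero, Nat.cast_zero, zero_sub]
      rw [map_mul]
      ring_nf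
      simp [map_neg]
      ring
    | succ t =>
      rw [derivative_mul, derivative_C, derivative_pow, hD, derivative_X_sub_C]
      push_cast
      simp only [map_add, map_sub, map_mul, map_one, map_natCast]
      ring
  rw [derivative_sum, Finset.mul_sum, Finset.mul_sum, ← Finset.sum_sub_distrib]
  have hcong : ∀ s ∈ Finset.range (r.natDegree + 1),
      D * derivative (C (((taylor z) r).coeff s / ((s : ℂ) - n)) * D ^ s)
        - C (n : ℂ) * (C (((taylor z) r).coeff s / ((s : ℂ) - n)) * D ^ s)
        = C (((taylor z) r).coeff s) * D ^ s := by
    intro s _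
    rw [hterm]
    congr 1
    by_cases hs : s = n
    · subst hs; rw [hres]; simp
    · rw [div_mul_cancel₀]
      exact sub_ne_zero.mpr (by exact_mod_cast hs)
  rw [Finset.sum_congr rfl hcong]
  have hexp := sum_taylor_eq r z
  rw [Polynomial.sum_over_range ((taylor z) r) (fun i => by simp), natDegree_taylor] at hexp
  exact hexp

theorem dvd_of_solution (z : ℂ) (n : ℕ) (hn : 0 < n) (g r : Polynomial ℂ)
    (heq : (X - C z) * derivative g - C (n : ℂ) * g = r)
    (hdvd : (X - C z) ^ n ∣ g) : (X - C z) ^ (n + 1) ∣ r := by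
  obtain ⟨u, rfl⟩ := hdvd
  obtain ⟨m, rfl⟩ := Nat.exists_eq_add_of_lt hn
  refine ⟨derivative u, ?_⟩
  rw [← heq, derivative_mul, derivative_pow, derivative_X_sub_C]
  push_cast
  ring

end RmfAux

/-- Let `z ∈ ℂ` be a root of `α` of multiplicity `n ≥ 3` and write
`A i Ā = F₁·i + F₂·j + F₃·k`.  Then there always exist `μ, b₁, b₂, b₃ ∈ ℂ[t]`, not all `b_m`
divisible by `(X − z)ⁿ`, with `α·b_m′ − α′·b_m = μ·F_m` for `m = 1, 2, 3`. -/
theorem rational_solution_exists_of_multiplicity_ge_three (α : Polynomial ℝ) (hα : α ≠ 0)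
    (A : Polynomial (Quaternion ℝ)) (hA : A ≠ 0) (hred : ReducedWrtI A)
    (F₁ F₂ F₃ : Polynomial ℝ)
    (hF : A * Polynomial.C qi * pconj A
      = toQ F₁ * Polynomial.C qi + toQ F₂ * Polynomial.C qj + toQ F₃ * Polynomial.C qk)
    (z : ℂ) (n : ℕ) (hn : 3 ≤ n) (hz : rootMultiplicity z (toC α) = n) :
    ∃ μ b₁ b₂ b₃ : Polynomial ℂ,
      ¬(((X - Polynomial.C z) ^ n ∣ b₁) ∧ ((X - Polynomial.C z) ^ n ∣ b₂) ∧
        ((X - Polynomial.C z) ^ n ∣ b₃)) ∧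
      toC α * derivative b₁ - derivative (toC α) * b₁ = μ * toC F₁ ∧
      toC α * derivative b₂ - derivative (toC α) * b₂ = μ * toC F₂ ∧
      toC α * derivative b₃ - derivative (toC α) * b₃ = μ * toC F₃ := by
  classical
  obtain ⟨k, hk⟩ : ∃ k, n = k + 3 := ⟨n - 3, by omega⟩
  set D : Polynomial ℂ := X - C z with hD
  set a : Polynomial ℂ := toC α with ha_def
  have htoCinj : Function.Injective toC :=
    Polynomial.map_injective _ (algebraMap ℝ ℂ).injective
  have ha : a ≠ 0 := fun h => hα (htoCinj (by simpa using h))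
  -- decompose a
  have hdvd : D ^ n ∣ a := by
    rw [hD, ← hz]; exact pow_rootMultiplicity_dvd a z
  obtain ⟨β, hβ⟩ := hdvd
  have hβnd : ¬ D ∣ β := by
    rintro ⟨γ, rfl⟩
    refine pow_rootMultiplicity_not_dvd ha z ?_
    rw [hz]
    exact ⟨γ, by rw [hβ]; ring⟩
  have hβ0 : β ≠ 0 := by rintro rfl; rw [mul_zero] at hβ; exact ha hβ
  -- the three polynomials
  set f : Fin 3 → Polynomial ℂ := ![toC F₁, toC F₂, toC F₃] with hf
  have hnc : ∃ m : Fin 3, (f m).eval z ≠ 0 := by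
    by_contra h
    push_neg at h
    exact RmfAux.no_common_root A hA hred F₁ F₂ F₃ hF z
      (by simpa [hf] using h 0) (by simpa [hf] using h 1) (by simpa [hf] using h 2)
  -- the linear functionals
  set φ : Fin 3 → ℕ → ℂ := fun m s => ((taylor z) (f m)).coeff s with hφ
  set L : (Fin 4 → ℂ) →ₗ[ℂ] (Fin 3 → ℂ) :=
    { toFun := fun v m => v 0 * φ m (k + 3) + v 1 * φ m (k + 2)
        + v 2 * φ m (k + 1) + v 3 * φ m k
      map_add' := by intro x y; funext m; simp; ring
      map_smul' := by intro c x; funext m; simp; ring } with hL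
  obtain ⟨v, hv0, hLv⟩ : ∃ v : Fin 4 → ℂ, v ≠ 0 ∧ L v = 0 := by
    have hni : ¬ Function.Injective L := by
      intro hinj
      have h4 := LinearMap.finrank_le_finrank_of_injective hinj
      rw [Module.finrank_pi, Module.finrank_pi] at h4
      simp at h4
    rw [Function.not_injective_iff] at hni
    obtain ⟨x, y, hxy, hne⟩ := hni
    exact ⟨x - y, sub_ne_zero.mpr hne, by rw [map_sub, hxy, sub_self]⟩
  -- the auxiliary polynomial h
  set h : Polynomial ℂ := C (v 0) + C (v 1) * D + C (v 2) * (D * D) + C (v 3) * (D * (D * D))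
    with hh
  have htay' : (taylor z) h = C (v 0) + C (v 1) * X + C (v 2) * (X * X)
      + C (v 3) * (X * (X * X)) := by
    have hDX : (taylor z) D = X := by
      rw [hD, map_sub, taylor_X, taylor_C]; ring
    rw [hh]
    simp only [map_add, taylor_mul, taylor_C, hDX]
  have htay : (taylor z) h = C (v 0) + C (v 1) * X + C (v 2) * X ^ 2
      + C (v 3) * X ^ 3 := by rw [htay']; ring
  have hh0 : h ≠ 0 := by
    intro h0
    apply hv0
    have : (taylor z) h = 0 := by rw [h0, map_zero]
    rw [htay] at this
    funext i
    fin_cases i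
    · have := congrArg (fun p => Polynomial.coeff p 0) this
      simpa using this
    · have := congrArg (fun p => Polynomial.coeff p 1) this
      simpa using this
    · have := congrArg (fun p => Polynomial.coeff p 2) this
      simpa using this
    · have := congrArg (fun p => Polynomial.coeff p 3) this
      simpa using this
  have hhdeg : h.natDegree ≤ 3 := by
    rw [← natDegree_taylor h z, htay]
    have b0 : (C (v 0)).natDegree ≤ 3 := by simp
    have b1 : (C (v 1) * X).natDegree ≤ 3 := by
      refine le_trans (natDegree_mul_le) ?_; simp
    have b2 : (C (v 2) * X ^ 2).natDegree ≤ 3 := by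
      refine le_trans (natDegree_mul_le) ?_
      simp [natDegree_pow]
    have b3 : (C (v 3) * X ^ 3).natDegree ≤ 3 := by
      refine le_trans (natDegree_mul_le) ?_
      simp [natDegree_pow]
    refine le_trans (natDegree_add_le _ _) ?_
    refine max_le (le_trans (natDegree_add_le _ _) ?_) b3
    exact max_le (le_trans (natDegree_add_le _ _) (max_le b0 b1)) b2
  -- residues vanish
  have hres : ∀ m : Fin 3, ((taylor z) (h * f m)).coeff n = 0 := by
    intro m
    have hcoeff : ((taylor z) (h * f m)).coeff n
        = v 0 * φ m (k + 3) + v 1 * φ m (k + 2) + v 2 * φ m (k + 1) + v 3 * φ m k := by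
      rw [taylor_mul, htay, hk]
      set G : Polynomial ℂ := (taylor z) (f m) with hG
      rw [add_mul, add_mul, add_mul,
        mul_assoc (C (v 1)), mul_assoc (C (v 2)), mul_assoc (C (v 3))]
      simp only [coeff_add, coeff_C_mul]
      have e1 : (X * G).coeff (k + 3) = G.coeff (k + 2) := by
        rw [show k + 3 = (k + 2) + 1 from rfl, ← pow_one (X : Polynomial ℂ),
          coeff_X_pow_mul]
      have e2 : (X ^ 2 * G).coeff (k + 3) = G.coeff (k + 1) := by
        rw [show k + 3 = (k + 1) + 2 from rfl, coeff_X_pow_mul]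
      have e3 : (X ^ 3 * G).coeff (k + 3) = G.coeff k := by
        rw [show k + 3 = k + 3 from rfl, coeff_X_pow_mul]
      rw [e1, e2, e3]
    rw [hcoeff]
    have := congrFun hLv m
    simpa [hL] using this
  -- solve for each m
  have hsol : ∀ m : Fin 3, ∃ g : Polynomial ℂ,
      D * derivative g - C (n : ℂ) * g = h * f m := by
    intro m
    exact RmfAux.solveT z n (h * f m) (hres m)
  choose g hg using hsol
  -- define data
  set μ : Polynomial ℂ := β * β * D ^ (k + 2) * h with hμ
  have hkey : ∀ m : Fin 3,
      a * derivative (β * g m) - derivative a * (β * g m) = μ * f m := by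
    intro m
    calc a * derivative (β * g m) - derivative a * (β * g m)
        = β * β * D ^ (k + 2) * (D * derivative (g m) - C (n : ℂ) * g m) := by
          rw [hβ, hk]
          simp only [hD, derivative_mul, derivative_pow, derivative_X_sub_C,
            Nat.add_sub_cancel]
          push_cast
          ring
      _ = β * β * D ^ (k + 2) * (h * f m) := by rw [hg m]
      _ = μ * f m := by rw [hμ]; ring
  -- non-divisibility
  obtain ⟨m₀, hm₀⟩ := hnc
  have hmain : ¬ D ^ n ∣ β * g m₀ := by
    intro hdvd
    have hDirr : Irreducible D := by rw [hD]; exact irreducible_X_sub_C z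
    have hcop : IsCoprime D β := (hDirr.coprime_iff_not_dvd).mpr hβnd
    have hgd : D ^ n ∣ g m₀ := (hcop.pow_left).dvd_of_dvd_mul_left hdvd
    have hr : D ^ (n + 1) ∣ h * f m₀ :=
      RmfAux.dvd_of_solution z n (by omega) (g m₀) (h * f m₀) (hg m₀) hgd
    have hnf : ¬ D ∣ f m₀ := by
      rw [hD, dvd_iff_isRoot]
      exact hm₀
    have hcopf : IsCoprime (D ^ (n + 1)) (f m₀) :=
      ((hDirr.coprime_iff_not_dvd).mpr hnf).pow_left
    have hdh : D ^ (n + 1) ∣ h := by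
      refine hcopf.dvd_of_dvd_mul_left ?_
      rwa [mul_comm (f m₀) h]
    have hdeg := natDegree_le_of_dvd hdh hh0
    rw [natDegree_pow, hD, natDegree_X_sub_C, mul_one] at hdeg
    omega
  refine ⟨μ, β * g 0, β * g 1, β * g 2, ?_, ?_, ?_, ?_⟩
  · rintro ⟨d1, d2, d3⟩
    apply hmain
    fin_cases m₀
    · exact d1
    · exact d2
    · exact d3
  · have := hkey 0; simpa [hf] using this
  · have := hkey 1; simpa [hf] using this
  · have := hkey 2; simpa [hf] using this
end
end
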